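/- Let p, q be distinct primes with p ≡ 3 (mod 8) and q ≡ 1 (mod 8), and suppose p is not a quadratic residue modulo q. Then the equation x² - pq·y² = -2 has a solution in positive integers. -/

import Mathlib

/-- Coprime factors of a square in ℕ are squares. -/
lemma nat_sq_of_coprime_aux {a b c : ℕ} (h : Nat.Coprime a b) (heq : a * b = c ^ 2) :
    ∃ d, a = d ^ 2 :=
  exists_eq_pow_of_mul_eq_pow (Nat.isUnit_iff.mpr h) heq

/-- Factorization lemma: if A*B = p*q*u² with A,B coprime, then
(A,B) is of one of four shapes. -/
lemma factor_lemma {p q A B u : ℕ} (hp : p.Prime) (hq : q.Prime) (hpq : p ≠ q)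
    (hco : Nat.Coprime A B) (h : A * B = p * q * u ^ 2) :
    (∃ a b, A = a ^ 2 ∧ B = p * q * b ^ 2) ∨ (∃ a b, A = p * q * a ^ 2 ∧ B = b ^ 2) ∨
    (∃ a b, A = p * a ^ 2 ∧ B = q * b ^ 2) ∨ (∃ a b, A = q * a ^ 2 ∧ B = p * b ^ 2) := by
  have hppos : 0 < p := hp.pos
  have hqpos : 0 < q := hq.pos
  have hcopq : Nat.Coprime p q := (Nat.coprime_primes hp hq).mpr hpq
  have hpd : p ∣ A * B := ⟨q * u ^ 2, by rw [h]; ring⟩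
  have hqd : q ∣ A * B := ⟨p * u ^ 2, by rw [h]; ring⟩
  rcases (Nat.Prime.dvd_mul hp).mp hpd with hpA | hpB <;>
    rcases (Nat.Prime.dvd_mul hq).mp hqd with hqA | hqB
  · -- p ∣ A, q ∣ A
    obtain ⟨A', rfl⟩ := Nat.Coprime.mul_dvd_of_dvd_of_dvd hcopq hpA hqA
    have h' : A' * B = u ^ 2 := by
      have := h
      rw [show p * q * A' * B = p * q * (A' * B) by ring] at this
      exact Nat.eq_of_mul_eq_mul_left (Nat.mul_pos hppos hqpos) this
    have hco' : Nat.Coprime A' B := Nat.Coprime.coprime_dvd_left (dvd_mul_left A' (p * q)) hco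
    obtain ⟨a, ha⟩ := nat_sq_of_coprime_aux hco' h'
    obtain ⟨b, hb⟩ := nat_sq_of_coprime_aux hco'.symm (by rwa [mul_comm] at h')
    exact Or.inr (Or.inl ⟨a, b, by rw [ha], hb⟩)
  · -- p ∣ A, q ∣ B
    obtain ⟨A', rfl⟩ := hpA
    obtain ⟨B', rfl⟩ := hqB
    have h' : A' * B' = u ^ 2 := by
      have := h
      rw [show p * A' * (q * B') = p * q * (A' * B') by ring] at this
      exact Nat.eq_of_mul_eq_mul_left (Nat.mul_pos hppos hqpos) this
    have hco' : Nat.Coprime A' B' :=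
      Nat.Coprime.coprime_dvd_left (dvd_mul_left A' p)
        (Nat.Coprime.coprime_dvd_right (dvd_mul_left B' q) hco)
    obtain ⟨a, ha⟩ := nat_sq_of_coprime_aux hco' h'
    obtain ⟨b, hb⟩ := nat_sq_of_coprime_aux hco'.symm (by rwa [mul_comm] at h')
    exact Or.inr (Or.inr (Or.inl ⟨a, b, by rw [ha], by rw [hb]⟩))
  · -- q ∣ A, p ∣ B
    obtain ⟨A', rfl⟩ := hqA
    obtain ⟨B', rfl⟩ := hpB
    have h' : A' * B' = u ^ 2 := by
      have := h
      rw [show q * A' * (p * B') = p * q * (A' * B') by ring] at this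
      exact Nat.eq_of_mul_eq_mul_left (Nat.mul_pos hppos hqpos) this
    have hco' : Nat.Coprime A' B' :=
      Nat.Coprime.coprime_dvd_left (dvd_mul_left A' q)
        (Nat.Coprime.coprime_dvd_right (dvd_mul_left B' p) hco)
    obtain ⟨a, ha⟩ := nat_sq_of_coprime_aux hco' h'
    obtain ⟨b, hb⟩ := nat_sq_of_coprime_aux hco'.symm (by rwa [mul_comm] at h')
    exact Or.inr (Or.inr (Or.inr ⟨a, b, by rw [ha], by rw [hb]⟩))
  · -- p ∣ B, q ∣ B
    obtain ⟨B', rfl⟩ := Nat.Coprime.mul_dvd_of_dvd_of_dvd hcopq hpB hqB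
    have h' : A * B' = u ^ 2 := by
      have := h
      rw [show A * (p * q * B') = p * q * (A * B') by ring] at this
      exact Nat.eq_of_mul_eq_mul_left (Nat.mul_pos hppos hqpos) this
    have hco' : Nat.Coprime A B' :=
      Nat.Coprime.coprime_dvd_right (dvd_mul_left B' (p * q)) hco
    obtain ⟨a, ha⟩ := nat_sq_of_coprime_aux hco' h'
    obtain ⟨b, hb⟩ := nat_sq_of_coprime_aux hco'.symm (by rwa [mul_comm] at h')
    exact Or.inl ⟨a, b, ha, by rw [hb]⟩

lemma isSquare_of_mul_sq_eq {K : Type*} [Field K] {u a b : K} (ha : a ≠ 0)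
    (h : u * a ^ 2 = b) (hb : IsSquare b) : IsSquare u := by
  obtain ⟨c, hc⟩ := hb
  refine ⟨c * a⁻¹, ?_⟩
  have h2 : u * a ^ 2 = c * c := by rw [h, hc]
  field_simp
  linear_combination h2

lemma key_lemma (p q : ℕ) (hp : p.Prime) (hq : q.Prime) (hpq : p ≠ q)
    (hp8 : p % 8 = 3) (hq8 : q % 8 = 1) (hleg : ¬ IsSquare ((p : ZMod q))) :
    ∀ u : ℕ, 0 < u → ∀ t : ℕ, t ^ 2 = p * q * u ^ 2 + 1 →
      ∃ x y : ℤ, 0 < x ∧ 0 < y ∧ x ^ 2 - (p : ℤ) * q * y ^ 2 = -2 := by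
  haveI : Fact p.Prime := ⟨hp⟩
  haveI : Fact q.Prime := ⟨hq⟩
  have hp2 : p ≠ 2 := by omega
  have hq2 : q ≠ 2 := by omega
  have hqbig : 2 ≤ q := hq.two_le
  have hpbig : 2 ≤ p := hp.two_le
  -- quadratic residue facts
  have hqsq : ¬ IsSquare ((q : ZMod p)) := by
    intro hs
    exact hleg ((ZMod.exists_sq_eq_prime_iff_of_mod_four_eq_one (by omega) hp2).mpr hs)
  have h2q : IsSquare (2 : ZMod q) := (ZMod.exists_sq_eq_two_iff hq2).mpr (Or.inl hq8)
  have hn1q : IsSquare (-1 : ZMod q) := ZMod.exists_sq_eq_neg_one_iff.mpr (by omega)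
  have h2p : ¬ IsSquare (2 : ZMod p) := by
    rw [ZMod.exists_sq_eq_two_iff hp2]
    omega
  have hn1p : ¬ IsSquare (-1 : ZMod p) := by
    rw [ZMod.exists_sq_eq_neg_one_iff]
    omega
  have h2qne : ((2 : ℕ) : ZMod q) ≠ 0 := by
    rw [Ne, ZMod.natCast_eq_zero_iff]
    intro hdv
    have := Nat.le_of_dvd (by norm_num) hdv
    omega
  have h1pne : ((1 : ℕ) : ZMod p) ≠ 0 := by
    rw [Ne, ZMod.natCast_eq_zero_iff]
    intro hdv
    have := Nat.le_of_dvd (by norm_num) hdv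
    omega
  have h1qne : ((1 : ℕ) : ZMod q) ≠ 0 := by
    rw [Ne, ZMod.natCast_eq_zero_iff]
    intro hdv
    have := Nat.le_of_dvd (by norm_num) hdv
    omega
  intro u
  induction u using Nat.strong_induction_on with
  | _ u ih =>
  intro hu t ht
  have ht2 : 2 ≤ t := by
    by_contra hlt
    push_neg at hlt
    have hu2 : 1 ≤ u ^ 2 := Nat.one_le_pow _ _ hu
    have h4 : 4 ≤ p * q * u ^ 2 := by
      calc 4 = 2 * 2 * 1 := by norm_num
      _ ≤ p * q * u ^ 2 := Nat.mul_le_mul (Nat.mul_le_mul hpbig hqbig) hu2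
    have h1 : t ^ 2 ≤ 1 := by
      calc t ^ 2 ≤ 1 ^ 2 := Nat.pow_le_pow_left (by omega) 2
      _ = 1 := one_pow 2
    linarith
  rcases Nat.even_or_odd t with htev | htodd
  · -- t even: consider (t-1)(t+1) = p q u²
    obtain ⟨r, hr⟩ : ∃ r, t = r + 2 := ⟨t - 2, by omega⟩
    subst hr
    have hrev : r % 2 = 0 := by
      obtain ⟨m, hm⟩ := htev
      omega
    have hAB : (r + 1) * (r + 3) = p * q * u ^ 2 := by
      have h1 : (r + 1) * (r + 3) + 1 = (r + 2) ^ 2 := by ring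
      linarith
    have hcop : Nat.Coprime (r + 1) (r + 3) := by
      have hd2 : Nat.gcd (r + 1) (r + 3) ∣ 2 := by
        have h := Nat.dvd_sub (Nat.gcd_dvd_right (r + 1) (r + 3)) (Nat.gcd_dvd_left (r + 1) (r + 3))
        rwa [show r + 3 - (r + 1) = 2 by omega] at h
      have hd1 : Nat.gcd (r + 1) (r + 3) ∣ r + 1 := Nat.gcd_dvd_left _ _
      obtain ⟨c, hc⟩ := hd1
      rcases (Nat.dvd_prime Nat.prime_two).mp hd2 with h1 | h1
      · exact h1
      · rw [h1] at hc; omega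
    rcases factor_lemma hp hq hpq hcop hAB with ⟨a, b, ha, hb⟩ | ⟨a, b, ha, hb⟩ |
      ⟨a, b, ha, hb⟩ | ⟨a, b, ha, hb⟩
    · -- r+1 = a², r+3 = pq b² : solution!
      have hkey : p * q * b ^ 2 = a ^ 2 + 2 := by omega
      have hapos : 0 < a := by
        rcases Nat.eq_zero_or_pos a with h0 | h0
        · subst h0; simp at ha
        · exact h0
      have hbpos : 0 < b := by
        rcases Nat.eq_zero_or_pos b with h0 | h0
        · subst h0; simp at hb
        · exact h0
      refine ⟨(a : ℤ), (b : ℤ), by exact_mod_cast hapos, by exact_mod_cast hbpos, ?_⟩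
      have : ((p * q * b ^ 2 : ℕ) : ℤ) = ((a ^ 2 + 2 : ℕ) : ℤ) := by exact_mod_cast hkey
      push_cast at this
      linarith
    · -- r+1 = pq a², r+3 = b² : b² ≡ 2 mod p, contradiction
      exfalso
      have hkey : b ^ 2 = p * q * a ^ 2 + 2 := by omega
      have : ((b : ZMod p)) ^ 2 = 2 := by
        have := congrArg (Nat.cast : ℕ → ZMod p) hkey
        push_cast at this
        rw [ZMod.natCast_self] at this
        simpa using this
      exact h2p ⟨(b : ZMod p), by rw [← this]; ring⟩
    · -- r+1 = p a², r+3 = q b² : p a² ≡ -2 mod q, contradiction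
      exfalso
      have hkey : q * b ^ 2 = p * a ^ 2 + 2 := by omega
      have hz : (p : ZMod q) * ((a : ZMod q)) ^ 2 = -2 := by
        have := congrArg (Nat.cast : ℕ → ZMod q) hkey
        push_cast at this
        rw [ZMod.natCast_self] at this
        simp at this
        linear_combination -this
      have hane : (a : ZMod q) ≠ 0 := by
        intro h0
        have hc : (-2 : ZMod q) = 0 := by rw [← hz, h0]; ring
        apply h2qne
        push_cast
        linear_combination -hc
      have hsq : IsSquare ((-2 : ZMod q)) := by
        have := hn1q.mul h2q
        simpa using this
      exact hleg (isSquare_of_mul_sq_eq hane hz hsq)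
    · -- r+1 = q a², r+3 = p b² : p b² ≡ 2 mod q, contradiction
      exfalso
      have hkey : p * b ^ 2 = q * a ^ 2 + 2 := by omega
      have hz : (p : ZMod q) * ((b : ZMod q)) ^ 2 = 2 := by
        have := congrArg (Nat.cast : ℕ → ZMod q) hkey
        push_cast at this
        rw [ZMod.natCast_self] at this
        simpa using this
      have hbne : (b : ZMod q) ≠ 0 := by
        intro h0
        have hc : (2 : ZMod q) = 0 := by rw [← hz, h0]; ring
        apply h2qne
        push_cast
        linear_combination hc
      exact hleg (isSquare_of_mul_sq_eq hbne hz h2q)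
  · -- t odd: t = 2k+1, k(k+1) = pq v²
    obtain ⟨k, hk⟩ := htodd
    subst hk
    have hprodd : (p * q * u ^ 2) % 2 = u % 2 := by
      have hpo : p % 2 = 1 := by omega
      have hqo : q % 2 = 1 := by omega
      rcases Nat.even_or_odd u with hue | huo
      · obtain ⟨m, hm⟩ := hue
        subst hm
        have : p * q * (m + m) ^ 2 = 2 * (p * q * m * (m + m)) := by ring
        omega
      · obtain ⟨m, hm⟩ := huo
        subst hm
        obtain ⟨s, hs⟩ : ∃ s, p * q = 2 * s + 1 := by
          refine ⟨(p * q - 1) / 2, ?_⟩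
          have : p * q % 2 = 1 := by
            rw [Nat.mul_mod, hpo, hqo]
          omega
        rw [hs]
        have : (2 * s + 1) * (2 * m + 1) ^ 2 =
            2 * (4 * s * m ^ 2 + 4 * s * m + s + 2 * m ^ 2 + 2 * m) + 1 := by ring
        omega
    have hueven : u % 2 = 0 := by
      have h4 : 4 * (k * (k + 1)) = p * q * u ^ 2 := by
        have h1 : (2 * k + 1) ^ 2 = 4 * (k * (k + 1)) + 1 := by ring
        linarith
      omega
    obtain ⟨v, hv⟩ : ∃ v, u = 2 * v := ⟨u / 2, by omega⟩
    subst hv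
    have hvpos : 0 < v := by omega
    have hAB : k * (k + 1) = p * q * v ^ 2 := by
      have h1 : 4 * (k * (k + 1)) + 1 = (2 * k + 1) ^ 2 := by ring
      have h2 : p * q * (2 * v) ^ 2 = 4 * (p * q * v ^ 2) := by ring
      have h3 : 4 * (k * (k + 1)) = 4 * (p * q * v ^ 2) := by linarith
      omega
    have hkpos : 0 < k := by
      rcases Nat.eq_zero_or_pos k with h0 | h0
      · exfalso
        have hz0 : p * q * v ^ 2 = 0 := by rw [← hAB, h0]
        have := Nat.mul_pos (Nat.mul_pos hp.pos hq.pos) (pow_pos hvpos 2)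
        omega
      · exact h0
    have hcop : Nat.Coprime k (k + 1) := by
      have h := Nat.dvd_sub (Nat.gcd_dvd_right k (k + 1)) (Nat.gcd_dvd_left k (k + 1))
      rw [show k + 1 - k = 1 by omega] at h
      exact Nat.dvd_one.mp h
    rcases factor_lemma hp hq hpq hcop hAB with ⟨a, b, ha, hb⟩ | ⟨a, b, ha, hb⟩ |
      ⟨a, b, ha, hb⟩ | ⟨a, b, ha, hb⟩
    · -- k = a², k+1 = pq b² : a² ≡ -1 mod p, contradiction
      exfalso
      have hkey : p * q * b ^ 2 = a ^ 2 + 1 := by omega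
      have hz : ((a : ZMod p)) ^ 2 = -1 := by
        have := congrArg (Nat.cast : ℕ → ZMod p) hkey
        push_cast at this
        rw [ZMod.natCast_self] at this
        simp at this
        linear_combination -this
      exact hn1p ⟨(a : ZMod p), by rw [← hz]; ring⟩
    · -- k = pq a², k+1 = b² : descent!
      have hkey : b ^ 2 = p * q * a ^ 2 + 1 := by omega
      have hapos : 0 < a := by
        rcases Nat.eq_zero_or_pos a with h0 | h0
        · subst h0; simp at ha; omega
        · exact h0
      have hav : a ≤ v := by
        have h1 : p * q * a ^ 2 ≤ p * q * v ^ 2 := by nlinarith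
        have h2 : a ^ 2 ≤ v ^ 2 := Nat.le_of_mul_le_mul_left h1 (Nat.mul_pos hp.pos hq.pos)
        nlinarith
      exact ih a (by omega) hapos b hkey
    · -- k = p a², k+1 = q b² : q b² ≡ 1 mod p, contradiction
      exfalso
      have hkey : q * b ^ 2 = p * a ^ 2 + 1 := by omega
      have hz : (q : ZMod p) * ((b : ZMod p)) ^ 2 = 1 := by
        have := congrArg (Nat.cast : ℕ → ZMod p) hkey
        push_cast at this
        rw [ZMod.natCast_self] at this
        simpa using this
      have hbne : (b : ZMod p) ≠ 0 := by
        intro h0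
        exact one_ne_zero (by rw [← hz, h0]; ring : (1 : ZMod p) = 0)
      exact hqsq (isSquare_of_mul_sq_eq hbne hz IsSquare.one)
    · -- k = q a², k+1 = p b² : p b² ≡ 1 mod q, contradiction
      exfalso
      have hkey : p * b ^ 2 = q * a ^ 2 + 1 := by omega
      have hz : (p : ZMod q) * ((b : ZMod q)) ^ 2 = 1 := by
        have := congrArg (Nat.cast : ℕ → ZMod q) hkey
        push_cast at this
        rw [ZMod.natCast_self] at this
        simpa using this
      have hbne : (b : ZMod q) ≠ 0 := by
        intro h0
        exact one_ne_zero (by rw [← hz, h0]; ring : (1 : ZMod q) = 0)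
      exact hleg (isSquare_of_mul_sq_eq hbne hz IsSquare.one)

theorem stmt_3 (p q : ℕ) (hp : p.Prime) (hq : q.Prime) (hpq : p ≠ q)
    (hp8 : p % 8 = 3) (hq8 : q % 8 = 1) (hleg : ¬ IsSquare ((p : ZMod q))) :
    ∃ x y : ℤ, 0 < x ∧ 0 < y ∧ x ^ 2 - (p : ℤ) * q * y ^ 2 = -2 := by
  have hdpos : (0 : ℤ) < (p : ℤ) * q := by
    have := hp.pos
    have := hq.pos
    positivity
  have hdns : ¬ IsSquare ((p : ℤ) * q) := by
    intro ⟨r, hr⟩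
    have hnat : p * q = r.natAbs * r.natAbs := by
      have h := congrArg Int.natAbs hr
      simpa [Int.natAbs_mul] using h
    have hpd : p ∣ r.natAbs * r.natAbs := ⟨q, by omega⟩
    have hpr : p ∣ r.natAbs := (Nat.Prime.dvd_mul hp).mp hpd |>.elim id id
    obtain ⟨s, hs⟩ := hpr
    have : p * q = p * (p * s * s) := by rw [hnat, hs]; ring
    have hq' : q = p * s * s := Nat.eq_of_mul_eq_mul_left hp.pos this
    have : p ∣ q := ⟨s * s, by rw [hq']; ring⟩
    exact hpq ((Nat.prime_dvd_prime_iff_eq hp hq).mp this)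
  obtain ⟨x, y, hxy, hy⟩ := Pell.exists_of_not_isSquare hdpos hdns
  set t := x.natAbs with htdef
  set u := y.natAbs with hudef
  have hupos : 0 < u := Int.natAbs_pos.mpr hy
  have ht : t ^ 2 = p * q * u ^ 2 + 1 := by
    have h1 : (t : ℤ) ^ 2 = x ^ 2 := by
      rw [htdef]; push_cast [Int.natAbs_sq]; rw [sq_abs]
    have h2 : (u : ℤ) ^ 2 = y ^ 2 := by
      rw [hudef]; push_cast [Int.natAbs_sq]; rw [sq_abs]
    have : ((t ^ 2 : ℕ) : ℤ) = ((p * q * u ^ 2 + 1 : ℕ) : ℤ) := by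
      push_cast
      rw [h1, h2]
      linarith
    exact_mod_cast this
  exact key_lemma p q hp hq hpq hp8 hq8 hleg u hupos t ht
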